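/- Let G = ⟨x, y, z⟩ be one of the groups with relations z^{2^ℓ} = 1, [y,x] = z, [z,x] = z^{-2}, [z,y] = z^{-2} (and any of the admissible power relations on x, y), with ℓ ≥ 2, and F a field of characteristic 2. Set Z = z + 1 ∈ FG and Γ = Z·FG, which equals the relative augmentation ideal Δ([G,G])FG. Then for every g ∈ G and i ≥ 0, the Lie commutator [g, Z^{2^i}] = gZ^{2^i} + Z^{2^i}g lies in Γ^{2^{i+1}}. -/

import Mathlib

open FreeGroup in
/-- Relators of G_θ = ⟨x,y,z | x^{2^n} = z^{r·2^{ℓ-1}}, y^{2^m} = x^{s·2^m}·z^{t·2^{ℓ-1}},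
z^{2^ℓ} = 1, [y,x] = z, [z,x] = z⁻², [z,y] = z⁻²⟩ (convention [y,x] = y⁻¹x⁻¹yx;
generators 0 ↦ x, 1 ↦ y, 2 ↦ z); these are the admissible power relations on x, y. -/
def relsGθ (n m ℓ r s t : ℕ) : Set (FreeGroup (Fin 3)) :=
  { (of 0) ^ (2 ^ n) * ((of 2) ^ (r * 2 ^ (ℓ - 1)))⁻¹,
    (of 1) ^ (2 ^ m) * ((of 0) ^ (s * 2 ^ m) * (of 2) ^ (t * 2 ^ (ℓ - 1)))⁻¹,
    (of 2) ^ (2 ^ ℓ),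
    (of 1)⁻¹ * (of 0)⁻¹ * of 1 * of 0 * (of 2)⁻¹,
    (of 2)⁻¹ * (of 0)⁻¹ * of 2 * of 0 * (of 2) ^ 2,
    (of 2)⁻¹ * (of 1)⁻¹ * of 2 * of 1 * (of 2) ^ 2 }

abbrev Gθ (n m ℓ r s t : ℕ) := PresentedGroup (relsGθ n m ℓ r s t)

/-- The element Z = z + 1 of the group algebra F·G_θ. -/
noncomputable def Zel (n m ℓ r s t : ℕ) (F : Type*) [Field F] :
    MonoidAlgebra F (Gθ n m ℓ r s t) :=
  MonoidAlgebra.of F (Gθ n m ℓ r s t) (PresentedGroup.of 2) + 1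

/-- Γ = Z·FG, the relative augmentation ideal Δ([G,G])·FG, as an F-subspace. -/
noncomputable def Gamma (n m ℓ r s t : ℕ) (F : Type*) [Field F] :
    Submodule F (MonoidAlgebra F (Gθ n m ℓ r s t)) :=
  Submodule.span F {w : MonoidAlgebra F (Gθ n m ℓ r s t) |
    ∃ u : MonoidAlgebra F (Gθ n m ℓ r s t), w = Zel n m ℓ r s t F * u}

/-- From the relator `z⁻¹x⁻¹zxz² = 1` we get `x z x⁻¹ = z⁻¹`. -/
private lemma conj_of_rel {G : Type*} [Group G] {x z : G}
    (h : z⁻¹ * x⁻¹ * z * x * z ^ 2 = 1) : x * z * x⁻¹ = z⁻¹ := by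
  have h1 : x⁻¹ * z * x = z⁻¹ := by
    calc x⁻¹ * z * x = z * (z⁻¹ * x⁻¹ * z * x * z ^ 2) * z⁻¹ * z⁻¹ := by group
      _ = z * 1 * z⁻¹ * z⁻¹ := by rw [h]
      _ = z⁻¹ := by group
  have h3 : x⁻¹ * z⁻¹ * x = z := by
    calc x⁻¹ * z⁻¹ * x = (x⁻¹ * z * x)⁻¹ := by group
      _ = z := by rw [h1, inv_inv]
  calc x * z * x⁻¹ = x * (x⁻¹ * z⁻¹ * x) * x⁻¹ := by rw [h3]
    _ = z⁻¹ := by group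

example : True := trivial

section conj

variable (n m ℓ r s t : ℕ)

private lemma rel_one {w : FreeGroup (Fin 3)} (hw : w ∈ relsGθ n m ℓ r s t) :
    (QuotientGroup.mk w : Gθ n m ℓ r s t) = 1 :=
  (QuotientGroup.eq_one_iff w).mpr (Subgroup.subset_normalClosure hw)

private lemma conj_z (g : Gθ n m ℓ r s t) :
    g * PresentedGroup.of 2 * g⁻¹ = PresentedGroup.of 2 ∨
    g * PresentedGroup.of 2 * g⁻¹ = (PresentedGroup.of 2 : Gθ n m ℓ r s t)⁻¹ := by
  set z : Gθ n m ℓ r s t := PresentedGroup.of 2 with hzdef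
  have hmem : g ∈ Subgroup.closure
      (Set.range (PresentedGroup.of : Fin 3 → Gθ n m ℓ r s t)) := by
    rw [PresentedGroup.closure_range_of]; trivial
  induction hmem using Subgroup.closure_induction with
  | mem a ha =>
    obtain ⟨j, rfl⟩ := ha
    have hofmk : ∀ j : Fin 3, (PresentedGroup.of j : Gθ n m ℓ r s t)
        = QuotientGroup.mk (FreeGroup.of j) := fun _ => rfl
    fin_cases j
    · right
      refine conj_of_rel ?_
      have h := rel_one n m ℓ r s t (w :=
        (FreeGroup.of 2)⁻¹ * (FreeGroup.of 0)⁻¹ * FreeGroup.of 2 * FreeGroup.of 0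
          * (FreeGroup.of 2) ^ 2) (by simp [relsGθ])
      exact h
    · right
      refine conj_of_rel ?_
      have h := rel_one n m ℓ r s t (w :=
        (FreeGroup.of 2)⁻¹ * (FreeGroup.of 1)⁻¹ * FreeGroup.of 2 * FreeGroup.of 1
          * (FreeGroup.of 2) ^ 2) (by simp [relsGθ])
      exact h
    · left
      show z * z * z⁻¹ = z
      group
  | one => left; group
  | mul a b _ _ ha hb =>
    have key : (a * b) * z * (a * b)⁻¹ = a * (b * z * b⁻¹) * a⁻¹ := by group
    rcases hb with hb | hb
    · rw [key, hb]; exact ha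
    · rw [key, hb]
      have : a * z⁻¹ * a⁻¹ = (a * z * a⁻¹)⁻¹ := by group
      rw [this]
      rcases ha with ha | ha
      · right; rw [ha]
      · left; rw [ha, inv_inv]
  | inv a _ ha =>
    rcases ha with ha | ha
    · left
      calc a⁻¹ * z * a⁻¹⁻¹ = a⁻¹ * (a * z * a⁻¹) * a := by rw [ha, inv_inv]
        _ = z := by group
    · right
      have h2 : a⁻¹ * z⁻¹ * a = z := by
        calc a⁻¹ * z⁻¹ * a = a⁻¹ * (a * z * a⁻¹) * a := by rw [ha]
          _ = z := by group
      calc a⁻¹ * z * a⁻¹⁻¹ = (a⁻¹ * z⁻¹ * a)⁻¹ := by group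
        _ = z⁻¹ := by rw [h2]

private lemma myConjZpow (g : Gθ n m ℓ r s t) (k : ℕ) :
    g * (PresentedGroup.of 2 : Gθ n m ℓ r s t) ^ k * g⁻¹ = (PresentedGroup.of 2) ^ k ∨
    g * (PresentedGroup.of 2 : Gθ n m ℓ r s t) ^ k * g⁻¹
      = ((PresentedGroup.of 2 : Gθ n m ℓ r s t) ^ k)⁻¹ := by
  rcases conj_z n m ℓ r s t g with h | h
  · left; rw [← conj_pow, h]
  · right; rw [← conj_pow, h, inv_pow]

end conj

/-- For ℓ ≥ 2 and any admissible parameters, and F of characteristic 2,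
for every g ∈ G_θ and i ≥ 0, the Lie commutator [g, Z^{2^i}] = g·Z^{2^i} + Z^{2^i}·g
lies in Γ^{2^{i+1}}. -/
theorem stmt19 (n m ℓ r s t : ℕ) (hm : 1 ≤ m) (hnm : m ≤ n) (hℓ : 2 ≤ ℓ)
    (hr : r ≤ 1) (hs : s ≤ 2 ^ (n - m) - 1) (ht : t ≤ 1)
    (F : Type*) [Field F] [CharP F 2] :
    ∀ (g : Gθ n m ℓ r s t) (i : ℕ),
      MonoidAlgebra.of F (Gθ n m ℓ r s t) g * (Zel n m ℓ r s t F) ^ (2 ^ i) +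
        (Zel n m ℓ r s t F) ^ (2 ^ i) * MonoidAlgebra.of F (Gθ n m ℓ r s t) g ∈
      Gamma n m ℓ r s t F ^ (2 ^ (i + 1)) := by
  intro g i
  haveI : Fact (Nat.Prime 2) := ⟨Nat.prime_two⟩
  haveI : CharP (MonoidAlgebra F (Gθ n m ℓ r s t)) 2 :=
    charP_of_injective_algebraMap (algebraMap F (MonoidAlgebra F (Gθ n m ℓ r s t))).injective 2
  set φ := MonoidAlgebra.of F (Gθ n m ℓ r s t) with hφ
  set z : Gθ n m ℓ r s t := PresentedGroup.of 2 with hz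
  set Z := Zel n m ℓ r s t F with hZ
  set Γ := Gamma n m ℓ r s t F with hΓ
  -- Z ^ (2 ^ j) = φ z ^ (2 ^ j) + 1
  have hZpow : ∀ j : ℕ, Z ^ (2 ^ j) = φ (z ^ (2 ^ j)) + 1 := by
    intro j
    rw [hZ, Zel, map_pow, ← hφ, ← hz,
      add_pow_char_pow_of_commute _ _ (Commute.one_right _), one_pow]
  -- membership lemma
  have hZmem : ∀ u : MonoidAlgebra F (Gθ n m ℓ r s t), Z * u ∈ Γ :=
    fun u => Submodule.subset_span ⟨u, rfl⟩
  have hmemPow : ∀ (c : MonoidAlgebra F (Gθ n m ℓ r s t)) (k : ℕ), Z ^ (k + 1) * c ∈ Γ ^ (k + 1) := by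
    intro c k
    rw [pow_succ Z, mul_assoc, pow_succ Γ]
    exact Submodule.mul_mem_mul
      (Submodule.pow_mem_pow _ (by simpa using hZmem 1) k) (hZmem c)
  have hself : ∀ u : MonoidAlgebra F (Gθ n m ℓ r s t), u + u = 0 := CharTwo.add_self_eq_zero
  rcases myConjZpow n m ℓ r s t g (2 ^ i) with hc | hc
  · -- commuting case: the expression is 0
    have hcomm : g * z ^ (2 ^ i) = z ^ (2 ^ i) * g := by
      calc g * z ^ (2 ^ i) = (g * z ^ (2 ^ i) * g⁻¹) * g := by group
        _ = z ^ (2 ^ i) * g := by rw [hc]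
    have h1 : φ g * φ (z ^ (2 ^ i)) = φ (z ^ (2 ^ i)) * φ g := by
      rw [← map_mul, ← map_mul, hcomm]
    have e : φ g * Z ^ (2 ^ i) + Z ^ (2 ^ i) * φ g = 0 := by
      rw [hZpow i, mul_add, add_mul, mul_one, one_mul, h1, add_add_add_comm, hself, hself,
        add_zero]
    rw [e]
    exact Submodule.zero_mem _
  · -- anticommuting case
    have hcomm : g * z ^ (2 ^ i) = (z ^ (2 ^ i))⁻¹ * g := by
      calc g * z ^ (2 ^ i) = (g * z ^ (2 ^ i) * g⁻¹) * g := by group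
        _ = (z ^ (2 ^ i))⁻¹ * g := by rw [hc]
    have h1 : φ g * φ (z ^ (2 ^ i)) = φ ((z ^ (2 ^ i))⁻¹) * φ g := by
      rw [← map_mul, ← map_mul, hcomm]
    have hCB : φ ((z ^ (2 ^ i))⁻¹) + φ (z ^ (2 ^ i))
        = φ ((z ^ (2 ^ i))⁻¹) * (1 + φ (z ^ (2 ^ (i + 1)))) := by
      rw [mul_add, mul_one, ← map_mul]
      congr 2
      calc z ^ (2 ^ i) = (z ^ (2 ^ i))⁻¹ * (z ^ (2 ^ i) * z ^ (2 ^ i)) := by group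
        _ = (z ^ (2 ^ i))⁻¹ * z ^ (2 ^ (i + 1)) := by rw [← pow_add]; ring_nf
    have hZK : 1 + φ (z ^ (2 ^ (i + 1))) = Z ^ (2 ^ (i + 1)) := by
      rw [hZpow (i + 1), add_comm]
    have h2 : φ ((z ^ (2 ^ i))⁻¹) * φ z = φ z * φ ((z ^ (2 ^ i))⁻¹) := by
      rw [← map_mul, ← map_mul]
      congr 1
      group
    have hCcomm : Commute (φ ((z ^ (2 ^ i))⁻¹)) Z := by
      rw [hZ, Zel, ← hφ, ← hz]
      exact Commute.add_right h2 (Commute.one_right _)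
    have e : φ g * Z ^ (2 ^ i) + Z ^ (2 ^ i) * φ g
        = Z ^ (2 ^ (i + 1)) * (φ ((z ^ (2 ^ i))⁻¹) * φ g) := by
      rw [hZpow i, mul_add, add_mul, mul_one, one_mul, h1, add_add_add_comm, hself, add_zero,
        ← add_mul, hCB, hZK, mul_assoc, ← mul_assoc, (hCcomm.pow_right (2 ^ (i + 1))).eq,
        mul_assoc]
    rw [e]
    obtain ⟨k, hk⟩ : ∃ k, 2 ^ (i + 1) = k + 1 :=
      ⟨2 ^ (i + 1) - 1, (Nat.succ_pred_eq_of_pos (pow_pos two_pos _)).symm⟩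
    rw [hk]
    exact hmemPow _ k
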